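/- arXiv:1005.1130 — 4 statements merged into one kernel-verified Lean document; each statement's English description precedes it below -/
import Mathlib

section
/- Let (X, ρ) be a proper metric space (i.e., every closed ball {y ∈ X : ρ(x,y) ≤ R} is compact) and let (A_n)_{n∈ℕ} be a sequence of subsets of X such that: (1) limsup_{n→∞} diam(A_n) is finite; (2) each A_n is connected; (3) there exists a Cauchy sequence (x_n) in X with x_n ∈ A_n for every n. Then the Kuratowski limit supremum limsup_{n→∞} A_n := { x ∈ X : liminf_{n→∞} ρ(x, A_n) = 0 } is a connected subset of X. -/
/-- The Kuratowski limit supremum of a sequence of subsets of a metric space: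
`limsup A_n := { x : liminf ρ(x, A_n) = 0 }` (distances to sets taken in `[0,∞]`). -/
def kuratowskiLimsup {X : Type*} [MetricSpace X] (A : ℕ → Set X) : Set X :=
  {x | Filter.liminf (fun n => EMetric.infEdist x (A n)) Filter.atTop = 0}

open Filter Metric EMetric Set
open scoped ENNReal

lemma mem_kuratowskiLimsup_iff {X : Type*} [MetricSpace X] (A : ℕ → Set X) (z : X) :
    z ∈ kuratowskiLimsup A ↔
      ∀ ε : ℝ≥0∞, 0 < ε → ∃ᶠ n in atTop, EMetric.infEdist z (A n) < ε := by
  constructor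
  · intro h ε hε
    refine Filter.frequently_lt_of_liminf_lt ?_ ?_
    · isBoundedDefault
    · rw [show Filter.liminf (fun n => EMetric.infEdist z (A n)) Filter.atTop = 0 from h]
      exact hε
  · intro h
    refine le_antisymm ?_ (zero_le)
    by_contra h0
    have hpos : 0 < Filter.liminf (fun n => EMetric.infEdist z (A n)) Filter.atTop := by
      simpa [pos_iff_ne_zero] using h0
    obtain ⟨ε, hε0, hεlt⟩ := exists_between hpos
    have := Filter.liminf_le_of_frequently_le ((h ε hε0).mono fun n hn => hn.le)
    exact absurd (lt_of_le_of_lt this hεlt) (lt_irrefl _)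

lemma isClosed_kuratowskiLimsup {X : Type*} [MetricSpace X] (A : ℕ → Set X) :
    IsClosed (kuratowskiLimsup A) := by
  rw [← isOpen_compl_iff]
  rw [isOpen_iff_mem_nhds]
  intro z hz
  rw [mem_compl_iff, mem_kuratowskiLimsup_iff] at hz
  push_neg at hz
  obtain ⟨ε, hε, hev⟩ := hz
  obtain ⟨δ, hδ0, hδε⟩ := exists_between hε
  have hδ2 : 0 < δ / 2 := ENNReal.half_pos hδ0.ne'
  refine Filter.mem_of_superset (EMetric.ball_mem_nhds z hδ2) ?_
  intro w hw
  rw [mem_compl_iff, mem_kuratowskiLimsup_iff]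
  push_neg
  refine ⟨δ / 2, hδ2, ?_⟩
  filter_upwards [hev] with n hn
  -- infEdist z (A n) ≤ infEdist w (A n) + edist z w, so infEdist w ≥ ε - edist ≥ δ/2
  by_contra hcon
  rw [not_le] at hcon
  have h1 : EMetric.infEdist z (A n) ≤ EMetric.infEdist w (A n) + edist z w :=
    EMetric.infEdist_le_infEdist_add_edist
  have h2 : EMetric.infEdist w (A n) + edist z w < δ / 2 + δ / 2 := by
    refine ENNReal.add_lt_add hcon ?_
    rwa [EMetric.mem_ball, edist_comm] at hw
  rw [ENNReal.add_halves] at h2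
  exact absurd (lt_of_le_of_lt (h1.trans h2.le) hδε) (not_lt.mpr hn)

/-- Lemma 5.3 of the paper.  Let `(X, ρ)` be a proper metric space and
`(A_n)` a sequence of subsets of `X` such that (1) `limsup diam (A_n)` is finite, (2) each
`A_n` is connected, and (3) there is a Cauchy sequence `(x_n)` with `x_n ∈ A_n` for all `n`.
Then the Kuratowski limit supremum of `(A_n)` is a connected subset of `X`. -/
theorem kuratowskiLimsup_isConnected {X : Type*} [MetricSpace X] [ProperSpace X]
    (A : ℕ → Set X)
    (hdiam : Filter.limsup (fun n => EMetric.diam (A n)) Filter.atTop ≠ ⊤)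
    (hconn : ∀ n, IsConnected (A n))
    (x : ℕ → X) (hx : CauchySeq x) (hxA : ∀ n, x n ∈ A n) :
    IsConnected (kuratowskiLimsup A) := by
  set K := kuratowskiLimsup A with hK
  -- the limit of the Cauchy sequence
  obtain ⟨x₀, hx₀⟩ := cauchySeq_tendsto_of_complete hx
  have hx₀ev : ∀ ε : ℝ≥0∞, 0 < ε → ∀ᶠ n in atTop, edist (x n) x₀ < ε := by
    intro ε hε
    obtain ⟨N, hN⟩ := EMetric.tendsto_atTop.mp hx₀ ε hε
    exact Filter.eventually_atTop.mpr ⟨N, hN⟩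
  -- x₀ ∈ K
  have hx₀K : x₀ ∈ K := by
    rw [hK, mem_kuratowskiLimsup_iff]
    intro ε hε
    refine ((hx₀ev ε hε).mono fun n hn => ?_).frequently
    exact lt_of_le_of_lt ((EMetric.infEdist_le_edist_of_mem (hxA n)).trans_eq
      (edist_comm x₀ (x n))) hn
  -- a finite bound on the diameters
  set C : ℝ≥0∞ := Filter.limsup (fun n => EMetric.diam (A n)) Filter.atTop + 1 with hCdef
  have hCtop : C ≠ ⊤ := ENNReal.add_ne_top.mpr ⟨hdiam, ENNReal.one_ne_top⟩
  have hCev : ∀ᶠ n in atTop, EMetric.diam (A n) < C :=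
    Filter.eventually_lt_of_limsup_lt (ENNReal.lt_add_right hdiam one_ne_zero)
  -- K is bounded
  have hKbdd : K ⊆ Metric.closedBall x₀ ((C + 2).toReal) := by
    intro z hz
    rw [hK, mem_kuratowskiLimsup_iff] at hz
    have hfreq := ((hz 1 zero_lt_one).and_eventually
      ((hx₀ev 1 zero_lt_one).and hCev)).exists
    obtain ⟨n, h1, h2, h3⟩ := hfreq
    obtain ⟨p, hp, hzp⟩ := EMetric.infEdist_lt_iff.mp h1
    have hedist : edist z x₀ ≤ C + 2 := by
      calc edist z x₀ ≤ edist z p + edist p (x n) + edist (x n) x₀ := edist_triangle4 _ _ _ _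
        _ ≤ 1 + C + 1 :=
            add_le_add (add_le_add hzp.le
              ((EMetric.edist_le_diam_of_mem hp (hxA n)).trans h3.le)) h2.le
        _ = C + 2 := by ring
    rw [Metric.mem_closedBall, dist_edist]
    exact ENNReal.toReal_mono (by simp [hCtop]) hedist
  have hKclosed : IsClosed K := isClosed_kuratowskiLimsup A
  have hKcompact : IsCompact K :=
    (isCompact_closedBall x₀ _).of_isClosed_subset hKclosed hKbdd
  refine ⟨⟨x₀, hx₀K⟩, ?_⟩
  -- preconnectedness
  rintro U V hU hV hUV ⟨u, huK, huU⟩ ⟨v, hvK, hvV⟩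
  by_contra hcon
  rw [Set.not_nonempty_iff_eq_empty] at hcon
  -- the two compact pieces
  set S : Set X := K \ V with hSdef
  set T : Set X := K \ U with hTdef
  have hScomp : IsCompact S := hKcompact.diff hV
  have hTcomp : IsCompact T := hKcompact.diff hU
  have hST : Disjoint S T := by
    rw [Set.disjoint_left]
    rintro z ⟨hzK, hzV⟩ ⟨_, hzU⟩
    rcases hUV hzK with h | h
    · exact hzU h
    · exact hzV h
  have hcover : ∀ z ∈ K, z ∈ S ∪ T := by
    intro z hzK
    by_cases hzV : z ∈ V
    · right
      refine ⟨hzK, fun hzU => ?_⟩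
      have : z ∈ K ∩ (U ∩ V) := ⟨hzK, hzU, hzV⟩
      rw [hcon] at this
      exact this
    · exact Or.inl ⟨hzK, hzV⟩
  have hSne : S.Nonempty := by
    refine ⟨u, huK, fun huV => ?_⟩
    have : u ∈ K ∩ (U ∩ V) := ⟨huK, huU, huV⟩
    rw [hcon] at this; exact this
  have hTne : T.Nonempty := by
    refine ⟨v, hvK, fun hvU => ?_⟩
    have : v ∈ K ∩ (U ∩ V) := ⟨hvK, hvU, hvV⟩
    rw [hcon] at this; exact this
  obtain ⟨δ, hδ0, hδdisj⟩ := hST.exists_thickenings hScomp hTcomp.isClosed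
  -- the key symmetric argument
  have key : ∀ S' T' : Set X,
      Disjoint (Metric.thickening δ S') (Metric.thickening δ T') →
      x₀ ∈ S' → ∀ y ∈ T', y ∈ K → (∀ z ∈ K, z ∈ S' ∪ T') → False := by
    intro S' T' hdisj hxS y hyT hyK hcov
    set g : X → ℝ := fun z => Metric.infDist z S' with hgdef
    have hgcont : Continuous g := Metric.continuous_infDist_pt S'
    have hS'ne : S'.Nonempty := ⟨x₀, hxS⟩
    -- y is δ-far from S'
    have hgy : δ ≤ g y := by
      have hyT' : y ∈ Metric.thickening δ T' :=
        Metric.mem_thickening_iff_infEdist_lt.mpr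
          (by rw [EMetric.infEdist_zero_of_mem hyT]; exact ENNReal.ofReal_pos.mpr hδ0)
      have hyS' : y ∉ Metric.thickening δ S' := Set.disjoint_right.mp hdisj hyT'
      rw [Metric.mem_thickening_iff_infEdist_lt, not_lt] at hyS'
      rw [hgdef]
      exact (ENNReal.ofReal_le_iff_le_toReal (Metric.infEdist_ne_top hS'ne)).mp hyS'
    have hδ3 : (0:ℝ) < δ / 3 := by linarith
    -- frequently: A n is close to y, x n is close to x₀, diam small
    have hfreq : ∃ᶠ n in atTop, EMetric.infEdist y (A n) < ENNReal.ofReal (δ / 3) ∧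
        edist (x n) x₀ < ENNReal.ofReal (δ / 3) ∧ EMetric.diam (A n) < C := by
      rw [hK, mem_kuratowskiLimsup_iff] at hyK
      exact (hyK _ (ENNReal.ofReal_pos.mpr hδ3)).and_eventually
        ((hx₀ev _ (ENNReal.ofReal_pos.mpr hδ3)).and hCev)
    obtain ⟨φ, hφmono, hφ⟩ := Filter.extraction_of_frequently_atTop hfreq
    -- pick intermediate points
    have hz : ∀ k, ∃ z, z ∈ A (φ k) ∧ g z = δ / 2 := by
      intro k
      obtain ⟨h1, h2, _⟩ := hφ k
      obtain ⟨p, hpA, hpy⟩ := EMetric.infEdist_lt_iff.mp h1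
      rw [edist_comm, edist_lt_ofReal] at hpy
      have hgp : 2 * δ / 3 ≤ g p := by
        have hgyp : g y ≤ g p + dist y p := Metric.infDist_le_infDist_add_dist
        have hd : dist y p = dist p y := dist_comm y p
        linarith
      have hgx : g (x (φ k)) < δ / 3 := by
        rw [edist_lt_ofReal] at h2
        exact lt_of_le_of_lt (Metric.infDist_le_dist_of_mem hxS) h2
      have hmem : δ / 2 ∈ Set.Icc (g (x (φ k))) (g p) := ⟨by linarith, by linarith⟩
      obtain ⟨z, hzA, hzg⟩ := (hconn (φ k)).isPreconnected.intermediate_value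
        (hxA (φ k)) hpA hgcont.continuousOn hmem
      exact ⟨z, hzA, hzg⟩
    choose z hzA hzg using hz
    -- the z k are bounded
    have hzbdd : ∀ k, z k ∈ Metric.closedBall x₀ (C.toReal + δ / 3) := by
      intro k
      obtain ⟨_, h2, h3⟩ := hφ k
      rw [Metric.mem_closedBall]
      have hd1 : dist (z k) (x (φ k)) ≤ C.toReal := by
        rw [dist_edist]
        exact ENNReal.toReal_mono hCtop
          ((EMetric.edist_le_diam_of_mem (hzA k) (hxA (φ k))).trans h3.le)
      have hd2 : dist (x (φ k)) x₀ < δ / 3 := by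
        rw [dist_edist, ← ENNReal.lt_ofReal_iff_toReal_lt (edist_ne_top _ _)]
        exact h2
      calc dist (z k) x₀ ≤ dist (z k) (x (φ k)) + dist (x (φ k)) x₀ := dist_triangle _ _ _
        _ ≤ C.toReal + δ / 3 := by linarith
    -- extract a convergent subsequence
    obtain ⟨w, hwball, ψ, hψmono, hψtend⟩ :=
      (isCompact_closedBall x₀ (C.toReal + δ / 3)).tendsto_subseq hzbdd
    have hgw : g w = δ / 2 := by
      have h1 : Tendsto (g ∘ z ∘ ψ) atTop (nhds (g w)) := (hgcont.tendsto w).comp hψtend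
      have h2 : (g ∘ z ∘ ψ) = fun _ => δ / 2 := funext fun k => hzg (ψ k)
      rw [h2] at h1
      exact (tendsto_const_nhds_iff.mp h1).symm
    -- w ∈ K
    have hwK : w ∈ K := by
      rw [hK, mem_kuratowskiLimsup_iff]
      intro ε hε
      obtain ⟨N, hN⟩ := EMetric.tendsto_atTop.mp hψtend ε hε
      rw [Filter.frequently_atTop]
      intro M
      refine ⟨φ (ψ (max N M)), le_trans (le_trans (le_max_right N M)
        (hψmono.le_apply)) (hφmono.le_apply), ?_⟩
      have := hN (max N M) (le_max_left N M)
      calc EMetric.infEdist w (A (φ (ψ (max N M))))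
          ≤ edist w (z (ψ (max N M))) := EMetric.infEdist_le_edist_of_mem (hzA _)
        _ = edist ((z ∘ ψ) (max N M)) w := edist_comm _ _
        _ < ε := this
    -- contradiction
    rcases hcov w hwK with hwS | hwT
    · have : g w = 0 := Metric.infDist_zero_of_mem hwS
      rw [hgw] at this; linarith
    · have hw1 : w ∈ Metric.thickening δ T' :=
        Metric.mem_thickening_iff_infEdist_lt.mpr
          (by rw [EMetric.infEdist_zero_of_mem hwT]; exact ENNReal.ofReal_pos.mpr hδ0)
      have hw2 : w ∈ Metric.thickening δ S' := by
        rw [Metric.mem_thickening_iff_infEdist_lt,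
          ENNReal.lt_ofReal_iff_toReal_lt (Metric.infEdist_ne_top hS'ne)]
        have : (Metric.infEDist w S').toReal = g w := rfl
        rw [this, hgw]; linarith
      exact Set.disjoint_left.mp hdisj hw2 hw1
  -- apply the key argument according to where x₀ lies
  rcases hcover x₀ hx₀K with hx₀S | hx₀T
  · obtain ⟨y, hyT⟩ := hTne
    exact key S T hδdisj hx₀S y hyT hyT.1 hcover
  · obtain ⟨y, hyS⟩ := hSne
    exact key T S hδdisj.symm hx₀T y hyS hyS.1 fun z hz => (hcover z hz).symm
end

section
/- For every ξ ∈ S_A, the θ-orbit {θ_v(ξ) : v ∈ ℝ^k} is dense in S_A. -/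
open scoped Matrix

noncomputable section

/-- The integer lattice `ℤ^k` inside `ℝ^k`. -/
def lattice (k : ℕ) : AddSubgroup (Fin k → ℝ) :=
  AddSubgroup.pi Set.univ fun _ => AddSubgroup.zmultiples (1 : ℝ)

/-- The torus `𝕋^k = ℝ^k / ℤ^k`. -/
abbrev Torus (k : ℕ) := (Fin k → ℝ) ⧸ lattice k

/-- The canonical projection `ℝ^k → 𝕋^k`. -/
def torusProj (k : ℕ) : (Fin k → ℝ) →+ Torus k := QuotientAddGroup.mk' (lattice k)

lemma mem_lattice_iff {k : ℕ} {x : Fin k → ℝ} :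
    x ∈ lattice k ↔ ∀ i, ∃ n : ℤ, (n : ℝ) = x i := by
  simp [lattice, AddSubgroup.mem_pi, AddSubgroup.mem_zmultiples_iff, zsmul_eq_mul, mul_one]

variable {k : ℕ}

/-- The real matrix associated with an integer matrix. -/
def Areal (A : Matrix (Fin k) (Fin k) ℤ) : Matrix (Fin k) (Fin k) ℝ :=
  A.map (Int.cast : ℤ → ℝ)

lemma mulVec_lattice_mem (A : Matrix (Fin k) (Fin k) ℤ) {x : Fin k → ℝ}
    (hx : x ∈ lattice k) : Areal A *ᵥ x ∈ lattice k := by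
  rw [mem_lattice_iff] at hx ⊢
  choose n hn using hx
  intro i
  refine ⟨∑ j, A i j * n j, ?_⟩
  have : (Areal A *ᵥ x) i = ∑ j, (A i j : ℝ) * x j := by
    simp [Areal, Matrix.mulVec, dotProduct, Matrix.map_apply]
  rw [this]
  push_cast
  exact Finset.sum_congr rfl fun j _ => by rw [hn j]

/-- The endomorphism of `𝕋^k` induced by the integer matrix `A`. -/
def torusHom (A : Matrix (Fin k) (Fin k) ℤ) : Torus k →+ Torus k :=
  QuotientAddGroup.map (lattice k) (lattice k) (Areal A).mulVecLin.toAddMonoidHom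
    (fun _ hx => mulVec_lattice_mem A hx)

lemma torusHom_proj (A : Matrix (Fin k) (Fin k) ℤ) (x : Fin k → ℝ) :
    torusHom A (torusProj k x) = torusProj k (Areal A *ᵥ x) :=
  QuotientAddGroup.map_mk' _ _ _ _ x

/-- The toral solenoid `S_A`, as an additive subgroup of `(𝕋^k)^ℕ`. -/
def solenoid (A : Matrix (Fin k) (Fin k) ℤ) : AddSubgroup (ℕ → Torus k) where
  carrier := {ξ | ∀ j, ξ j = torusHom A (ξ (j + 1))}
  zero_mem' := by intro j; simp
  add_mem' := by
    intro a b ha hb j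
    simp only [Pi.add_apply, map_add]
    rw [← ha j, ← hb j]
  neg_mem' := by
    intro a ha j
    simp only [Pi.neg_apply, map_neg]
    rw [← ha j]

lemma mem_solenoid {A : Matrix (Fin k) (Fin k) ℤ} {ξ : ℕ → Torus k} :
    ξ ∈ solenoid A ↔ ∀ j, ξ j = torusHom A (ξ (j + 1)) := Iff.rfl

/-- The inverse of the matrix `A` over `ℝ`. -/
def Ainv (A : Matrix (Fin k) (Fin k) ℤ) : Matrix (Fin k) (Fin k) ℝ := (Areal A)⁻¹

lemma Areal_det_isUnit {A : Matrix (Fin k) (Fin k) ℤ} (hA : A.det ≠ 0) :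
    IsUnit (Areal A).det := by
  have h : ((A.det : ℤ) : ℝ) = (Areal A).det :=
    RingHom.map_det (Int.castRingHom ℝ) A
  rw [← h]
  exact isUnit_iff_ne_zero.mpr (by exact_mod_cast hA)

/-- The map `θ_v` on sequences: `(θ_v ξ)_j = ξ_j + [A^{-j} v]`. -/
def thetaFun (A : Matrix (Fin k) (Fin k) ℤ) (v : Fin k → ℝ) (ξ : ℕ → Torus k) :
    ℕ → Torus k :=
  fun j => ξ j + torusProj k ((Ainv A ^ j) *ᵥ v)

lemma thetaFun_mem (A : Matrix (Fin k) (Fin k) ℤ) (hA : A.det ≠ 0) (v : Fin k → ℝ)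
    {ξ : ℕ → Torus k} (hξ : ξ ∈ solenoid A) : thetaFun A v ξ ∈ solenoid A := by
  rw [mem_solenoid] at hξ ⊢
  intro j
  have key : Areal A *ᵥ ((Ainv A ^ (j + 1)) *ᵥ v) = (Ainv A ^ j) *ᵥ v := by
    rw [Matrix.mulVec_mulVec]
    rw [pow_succ', ← Matrix.mul_assoc, Ainv, Matrix.mul_nonsing_inv _ (Areal_det_isUnit hA),
      Matrix.one_mul]
  show ξ j + torusProj k ((Ainv A ^ j) *ᵥ v)
      = torusHom A (ξ (j + 1) + torusProj k ((Ainv A ^ (j + 1)) *ᵥ v))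
  rw [map_add, torusHom_proj, key, ← hξ j]

/-- The homeomorphism `θ_v : S_A → S_A` (Definition 4.1 of the paper). -/
def theta (A : Matrix (Fin k) (Fin k) ℤ) (hA : A.det ≠ 0) (v : Fin k → ℝ)
    (ξ : ↥(solenoid A)) : ↥(solenoid A) :=
  ⟨thetaFun A v ξ, thetaFun_mem A hA v ξ.2⟩

/-- The right shift `σ_A` on sequences. -/
def shiftFun (A : Matrix (Fin k) (Fin k) ℤ) (ξ : ℕ → Torus k) : ℕ → Torus k :=
  fun j => match j with
  | 0 => torusHom A (ξ 0)
  | j + 1 => ξ j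

lemma shiftFun_mem (A : Matrix (Fin k) (Fin k) ℤ) {ξ : ℕ → Torus k}
    (hξ : ξ ∈ solenoid A) : shiftFun A ξ ∈ solenoid A := by
  rw [mem_solenoid] at hξ ⊢
  intro j
  match j with
  | 0 => rfl
  | j + 1 => exact hξ j

/-- The shift automorphism `σ_A : S_A → S_A`. -/
def sigma (A : Matrix (Fin k) (Fin k) ℤ) (ξ : ↥(solenoid A)) : ↥(solenoid A) :=
  ⟨shiftFun A ξ, shiftFun_mem A ξ.2⟩

/-- The inverse shift `σ_A⁻¹` on sequences. -/
def shiftInvFun (ξ : ℕ → Torus k) : ℕ → Torus k := fun j => ξ (j + 1)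

lemma shiftInvFun_mem (A : Matrix (Fin k) (Fin k) ℤ) {ξ : ℕ → Torus k}
    (hξ : ξ ∈ solenoid A) : shiftInvFun ξ ∈ solenoid A :=
  mem_solenoid.mpr fun j => mem_solenoid.mp hξ (j + 1)

/-- The inverse shift `σ_A⁻¹ : S_A → S_A`. -/
def sigmaInv (A : Matrix (Fin k) (Fin k) ℤ) (ξ : ↥(solenoid A)) : ↥(solenoid A) :=
  ⟨shiftInvFun ξ, shiftInvFun_mem A ξ.2⟩

/-- Projection `p₀ : S_A → 𝕋^k` onto the zeroth coordinate. -/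
def pZero (A : Matrix (Fin k) (Fin k) ℤ) : ↥(solenoid A) →+ Torus k :=
  (Pi.evalAddMonoidHom (fun _ : ℕ => Torus k) 0).comp (solenoid A).subtype

lemma Ainv_pow_mul_pow {A : Matrix (Fin k) (Fin k) ℤ} (hA : A.det ≠ 0) (j m : ℕ) :
    Ainv A ^ j * Areal A ^ (j + m) = Areal A ^ m := by
  rw [pow_add, ← mul_assoc]
  have h1 : (Areal A)⁻¹ ^ j * Areal A ^ j = 1 := by
    induction j with
    | zero => simp
    | succ n ih =>
        rw [pow_succ, pow_succ', mul_assoc, ← mul_assoc (Areal A)⁻¹,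
          Matrix.nonsing_inv_mul _ (Areal_det_isUnit hA), one_mul, ih]
  rw [Ainv, h1, one_mul]

lemma torusProj_pow_mulVec (A : Matrix (Fin k) (Fin k) ℤ) (m : ℕ) (w : Fin k → ℝ) :
    (torusHom A)^[m] (torusProj k w) = torusProj k (Areal A ^ m *ᵥ w) := by
  induction m with
  | zero => simp
  | succ n ih =>
      rw [Function.iterate_succ_apply', ih, torusHom_proj, Matrix.mulVec_mulVec, ← pow_succ']

lemma solenoid_iterate {A : Matrix (Fin k) (Fin k) ℤ} {η : ℕ → Torus k}
    (hη : η ∈ solenoid A) (j m : ℕ) : η j = (torusHom A)^[m] (η (j + m)) := by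
  induction m with
  | zero => simp
  | succ n ih =>
      rw [Function.iterate_succ_apply]
      show η j = (torusHom A)^[n] ((torusHom A) (η (j + n + 1)))
      rw [← mem_solenoid.mp hη (j + n)]
      exact ih

/-- For every `ξ ∈ S_A`, the `θ`-orbit `{θ_v ξ : v ∈ ℝ^k}` is dense
in `S_A`. -/
theorem theta_orbit_dense (k : ℕ) (hk : 1 ≤ k) (A : Matrix (Fin k) (Fin k) ℤ) (hA : A.det ≠ 0) (ξ : ↥(solenoid A)) :
    Dense (Set.range fun v : Fin k → ℝ => theta A hA v ξ) := by
  intro ζ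
  set η : ↥(solenoid A) := ζ - ξ with hηdef
  choose w hw using fun N => QuotientAddGroup.mk'_surjective (lattice k) (η.val N)
  set f : ℕ → ↥(solenoid A) := fun N => theta A hA (Areal A ^ N *ᵥ w N) ξ with hf
  have hcoord : ∀ j N, j ≤ N → (f N).val j = ζ.val j := by
    intro j N hjN
    have hsplit : j + (N - j) = N := Nat.add_sub_cancel' hjN
    have : (f N).val j
        = ξ.val j + torusProj k ((Ainv A ^ j) *ᵥ (Areal A ^ N *ᵥ w N)) := rfl
    have hkey : Ainv A ^ j * Areal A ^ N = Areal A ^ (N - j) := by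
      conv_lhs => rw [← hsplit, Ainv_pow_mul_pow hA]
    rw [this, Matrix.mulVec_mulVec, hkey, ← torusProj_pow_mulVec]
    have hwN : torusProj k (w N) = η.val N := hw N
    rw [hwN]
    have hiter := solenoid_iterate η.2 j (N - j)
    rw [hsplit] at hiter
    rw [← hiter]
    have hval : η.val j = ζ.val j - ξ.val j := rfl
    rw [hval]
    abel
  have htend : Filter.Tendsto f Filter.atTop (nhds ζ) := by
    rw [tendsto_subtype_rng, tendsto_pi_nhds]
    intro j
    refine Filter.Tendsto.congr' ?_ tendsto_const_nhds
    filter_upwards [Filter.eventually_ge_atTop j] with N hN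
    exact (hcoord j N hN).symm
  exact mem_closure_of_tendsto htend
    (Filter.Eventually.of_forall fun N => Set.mem_range_self _)

end
end

section
/- The map q̄ : S̄ → S_A, q̄(ξ, v) = θ_v(ξ), is a continuous surjective group homomorphism whose kernel is exactly N = α(ℤ^k) = {(ϑ_{-n}(e), n) : n ∈ ℤ^k}; consequently S̄/N is canonically isomorphic to S_A as a topological group. -/
open scoped Matrix

noncomputable section

variable {k : ℕ}

variable {k : ℕ}

/-- `Σ = p₀⁻¹([0])`, the fiber of the zeroth-coordinate projection over `0`,
as a subgroup of `S_A`. -/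
def SigmaGrp (A : Matrix (Fin k) (Fin k) ℤ) : AddSubgroup ↥(solenoid A) :=
  (pZero A).ker

lemma pZero_theta' (A : Matrix (Fin k) (Fin k) ℤ) (hA : A.det ≠ 0) (v : Fin k → ℝ)
    (ξ : ↥(solenoid A)) :
    pZero A (theta A hA v ξ) = pZero A ξ + torusProj k v := by
  show (ξ : ℕ → Torus k) 0 + torusProj k ((Ainv A ^ 0) *ᵥ v)
      = (ξ : ℕ → Torus k) 0 + torusProj k v
  rw [pow_zero, Matrix.one_mulVec]

/-- The inclusion of an integer vector into `ℝ^k`. -/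
def intVec (n : Fin k → ℤ) : Fin k → ℝ := fun i => (n i : ℝ)

lemma intVec_mem_lattice (n : Fin k → ℤ) : intVec n ∈ lattice k :=
  mem_lattice_iff.mpr fun i => ⟨n i, rfl⟩

lemma theta_neg_intVec_mem (A : Matrix (Fin k) (Fin k) ℤ) (hA : A.det ≠ 0)
    (n : Fin k → ℤ) : theta A hA (-intVec n) 0 ∈ SigmaGrp A := by
  rw [SigmaGrp, AddMonoidHom.mem_ker, pZero_theta', map_zero, zero_add, map_neg, neg_eq_zero]
  exact (QuotientAddGroup.eq_zero_iff _).mpr (intVec_mem_lattice n)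

/-- The embedding `α : ℤ^k → S̄ = Σ × ℝ^k`, `α n = (ϑ_{-n}(e), n)`. -/
def alphaMap (A : Matrix (Fin k) (Fin k) ℤ) (hA : A.det ≠ 0) (n : Fin k → ℤ) :
    ↥(SigmaGrp A) × (Fin k → ℝ) :=
  (⟨theta A hA (-intVec n) 0, theta_neg_intVec_mem A hA n⟩, intVec n)

/-- The map `q̄ : S̄ → S_A`, `q̄(ξ, v) = θ_v ξ`. -/
def qbar (A : Matrix (Fin k) (Fin k) ℤ) (hA : A.det ≠ 0)
    (p : ↥(SigmaGrp A) × (Fin k → ℝ)) : ↥(solenoid A) :=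
  theta A hA p.2 ↑p.1

lemma sigma_mem_SigmaGrp (A : Matrix (Fin k) (Fin k) ℤ) {x : ↥(solenoid A)}
    (hx : x ∈ SigmaGrp A) : sigma A x ∈ SigmaGrp A := by
  rw [SigmaGrp, AddMonoidHom.mem_ker] at hx ⊢
  show torusHom A ((x : ℕ → Torus k) 0) = 0
  rw [show (x : ℕ → Torus k) 0 = 0 from hx, map_zero]

/-- The map `σ̄ : S̄ → S̄`, `σ̄(ξ, v) = (σ_A ξ, A v)`. -/
def sigmabar (A : Matrix (Fin k) (Fin k) ℤ)
    (p : ↥(SigmaGrp A) × (Fin k → ℝ)) : ↥(SigmaGrp A) × (Fin k → ℝ) :=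
  (⟨sigma A ↑p.1, sigma_mem_SigmaGrp A p.1.2⟩, Areal A *ᵥ p.2)


/-! ### Auxiliary lemmas -/

section Aux

variable {k : ℕ}

lemma continuous_torusProj : Continuous (torusProj k) := continuous_quot_mk

lemma continuous_mulVecFun (M : Matrix (Fin k) (Fin k) ℝ) :
    Continuous fun v : Fin k → ℝ => M *ᵥ v := by
  refine continuous_pi fun i => ?_
  have h : (fun v : Fin k → ℝ => (M *ᵥ v) i) = fun v => ∑ j, M i j * v j := by
    funext v; simp [Matrix.mulVec, dotProduct]
  rw [h]
  exact continuous_finset_sum _ fun j _ => continuous_const.mul (continuous_apply j)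

lemma isClosed_lattice (k : ℕ) : IsClosed (lattice k : Set (Fin k → ℝ)) := by
  have h1 : (lattice k : Set (Fin k → ℝ))
      = Set.pi Set.univ fun _ : Fin k => (AddSubgroup.zmultiples (1 : ℝ) : Set ℝ) := rfl
  rw [h1]
  refine isClosed_set_pi fun i _ => ?_
  have h2 : (AddSubgroup.zmultiples (1 : ℝ) : Set ℝ) = Set.range ((↑) : ℤ → ℝ) := by
    ext x
    simp [AddSubgroup.mem_zmultiples_iff, zsmul_eq_mul, mul_one]
  rw [h2]
  exact Int.isClosedEmbedding_coe_real.isClosed_range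

instance : IsClosed ((lattice k : AddSubgroup (Fin k → ℝ)) : Set (Fin k → ℝ)) :=
  isClosed_lattice k

instance : T2Space (Torus k) := inferInstance

instance : CompactSpace (Torus k) := by
  refine ⟨?_⟩
  have h : (Set.univ : Set (Torus k))
      = torusProj k '' (Set.pi Set.univ fun _ : Fin k => Set.Icc (0 : ℝ) 1) := by
    ext x
    simp only [Set.mem_univ, true_iff, Set.mem_image]
    obtain ⟨y, rfl⟩ := QuotientAddGroup.mk'_surjective (lattice k) x
    refine ⟨fun i => Int.fract (y i), fun i _ => ⟨Int.fract_nonneg _, (Int.fract_lt_one _).le⟩, ?_⟩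
    show ((fun i => Int.fract (y i) : Fin k → ℝ) : Torus k) = (y : Torus k)
    rw [QuotientAddGroup.eq_iff_sub_mem]
    rw [mem_lattice_iff]
    intro i
    refine ⟨-⌊y i⌋, ?_⟩
    show ((-⌊y i⌋ : ℤ) : ℝ) = Int.fract (y i) - y i
    rw [Int.fract]
    push_cast
    ring
  rw [h]
  exact ((isCompact_univ_pi fun _ => isCompact_Icc).image continuous_torusProj)

lemma continuous_torusHom (A : Matrix (Fin k) (Fin k) ℤ) : Continuous (torusHom A) := by
  rw [(QuotientAddGroup.isQuotientMap_mk (lattice k)).continuous_iff]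
  have h : (torusHom A) ∘ (QuotientAddGroup.mk : (Fin k → ℝ) → Torus k)
      = fun x => torusProj k (Areal A *ᵥ x) := funext fun x => torusHom_proj A x
  rw [h]
  exact continuous_torusProj.comp (continuous_mulVecFun _)

lemma isClosed_solenoid (A : Matrix (Fin k) (Fin k) ℤ) :
    IsClosed (solenoid A : Set (ℕ → Torus k)) := by
  have h : (solenoid A : Set (ℕ → Torus k))
      = ⋂ j : ℕ, {ξ : ℕ → Torus k | ξ j = torusHom A (ξ (j + 1))} := by
    ext ξ
    simp only [Set.mem_iInter, Set.mem_setOf_eq]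
    exact mem_solenoid
  rw [h]
  exact isClosed_iInter fun j =>
    isClosed_eq (continuous_apply j) ((continuous_torusHom A).comp (continuous_apply (j + 1)))

lemma compactSpace_solenoid (A : Matrix (Fin k) (Fin k) ℤ) : CompactSpace ↥(solenoid A) :=
  isCompact_iff_compactSpace.mp (isClosed_solenoid A).isCompact

lemma continuous_pZero (A : Matrix (Fin k) (Fin k) ℤ) : Continuous (pZero A) :=
  (continuous_apply 0).comp continuous_subtype_val

lemma isClosed_SigmaGrp (A : Matrix (Fin k) (Fin k) ℤ) :
    IsClosed (SigmaGrp A : Set ↥(solenoid A)) := by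
  have h : (SigmaGrp A : Set ↥(solenoid A)) = pZero A ⁻¹' {0} := by
    ext x
    simp [SigmaGrp, AddMonoidHom.mem_ker]
  rw [h]
  exact isClosed_singleton.preimage (continuous_pZero A)

lemma compactSpace_SigmaGrp (A : Matrix (Fin k) (Fin k) ℤ) : CompactSpace ↥(SigmaGrp A) := by
  haveI := compactSpace_solenoid A
  exact isCompact_iff_compactSpace.mp (isClosed_SigmaGrp A).isCompact

variable (A : Matrix (Fin k) (Fin k) ℤ) (hA : A.det ≠ 0)

lemma theta_eq_add (v : Fin k → ℝ) (ξ : ↥(solenoid A)) :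
    theta A hA v ξ = ξ + theta A hA v 0 := by
  apply Subtype.ext
  funext j
  show thetaFun A v ξ j
      = (ξ : ℕ → Torus k) j + thetaFun A v ((0 : ↥(solenoid A)) : ℕ → Torus k) j
  simp only [thetaFun, ZeroMemClass.coe_zero, Pi.zero_apply, zero_add]

lemma theta_zero_add (v w : Fin k → ℝ) :
    theta A hA (v + w) 0 = theta A hA v 0 + theta A hA w 0 := by
  apply Subtype.ext
  funext j
  show thetaFun A (v + w) ((0 : ↥(solenoid A)) : ℕ → Torus k) j
      = thetaFun A v ((0 : ↥(solenoid A)) : ℕ → Torus k) j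
        + thetaFun A w ((0 : ↥(solenoid A)) : ℕ → Torus k) j
  simp only [thetaFun, ZeroMemClass.coe_zero, Pi.zero_apply, zero_add, Matrix.mulVec_add,
    map_add]

lemma theta_zero_zero : theta A hA 0 0 = 0 := by
  apply Subtype.ext
  funext j
  show thetaFun A 0 ((0 : ↥(solenoid A)) : ℕ → Torus k) j = (0 : ℕ → Torus k) j
  simp only [thetaFun, ZeroMemClass.coe_zero, Pi.zero_apply, zero_add, Matrix.mulVec_zero,
    map_zero]

lemma theta_zero_neg (v : Fin k → ℝ) : theta A hA (-v) 0 = - theta A hA v 0 := by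
  have h := theta_zero_add A hA v (-v)
  rw [add_neg_cancel, theta_zero_zero] at h
  exact eq_neg_of_add_eq_zero_right h.symm

lemma qbar_add' (p q : ↥(SigmaGrp A) × (Fin k → ℝ)) :
    qbar A hA (p + q) = qbar A hA p + qbar A hA q := by
  show theta A hA (p.2 + q.2) ↑(p.1 + q.1) = theta A hA p.2 ↑p.1 + theta A hA q.2 ↑q.1
  rw [theta_eq_add A hA (p.2 + q.2) ↑(p.1 + q.1), theta_eq_add A hA p.2 ↑p.1,
    theta_eq_add A hA q.2 ↑q.1, AddSubgroup.coe_add, theta_zero_add]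
  abel

lemma continuous_qbar : Continuous (qbar A hA) := by
  have h : Continuous fun p : ↥(SigmaGrp A) × (Fin k → ℝ) =>
      (fun j => ((p.1 : ↥(solenoid A)) : ℕ → Torus k) j
        + torusProj k ((Ainv A ^ j) *ᵥ p.2) : ℕ → Torus k) := by
    refine continuous_pi fun j => Continuous.add ?_ ?_
    · exact (continuous_apply j).comp
        (continuous_subtype_val.comp (continuous_subtype_val.comp continuous_fst))
    · exact (continuous_torusProj.comp (continuous_mulVecFun _)).comp continuous_snd
  exact Continuous.subtype_mk h _

lemma qbar_surj : Function.Surjective (qbar A hA) := by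
  intro η
  obtain ⟨v, hv0⟩ := QuotientAddGroup.mk'_surjective (lattice k) ((η : ℕ → Torus k) 0)
  have hv : torusProj k v = (η : ℕ → Torus k) 0 := hv0
  have hmem : η - theta A hA v 0 ∈ SigmaGrp A := by
    rw [SigmaGrp, AddMonoidHom.mem_ker, map_sub]
    have h1 : pZero A (theta A hA v 0) = torusProj k v := by
      rw [pZero_theta', map_zero, zero_add]
    have h2 : pZero A η = (η : ℕ → Torus k) 0 := rfl
    rw [h1, h2, ← hv]
    exact sub_self _
  refine ⟨(⟨η - theta A hA v 0, hmem⟩, v), ?_⟩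
  show theta A hA v (η - theta A hA v 0) = η
  rw [theta_eq_add]
  abel

lemma qbar_ker (p : ↥(SigmaGrp A) × (Fin k → ℝ)) :
    qbar A hA p = 0 ↔ p ∈ Set.range (alphaMap A hA) := by
  constructor
  · intro h
    have h' : ((p.1 : ↥(solenoid A))) = - theta A hA p.2 0 := by
      have h0 : (p.1 : ↥(solenoid A)) + theta A hA p.2 0 = 0 := by
        rw [← theta_eq_add]; exact h
      exact eq_neg_of_add_eq_zero_left h0
    have hv : torusProj k p.2 = 0 := by
      have hker : pZero A ((p.1 : ↥(solenoid A))) = 0 := p.1.2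
      rw [h', map_neg, neg_eq_zero] at hker
      have : pZero A (theta A hA p.2 0) = torusProj k p.2 := by
        rw [pZero_theta', map_zero, zero_add]
      rwa [this] at hker
    have hlat : p.2 ∈ lattice k := (QuotientAddGroup.eq_zero_iff p.2).mp hv
    rw [mem_lattice_iff] at hlat
    choose n hn using hlat
    have hveq : intVec n = p.2 := funext fun i => hn i
    refine ⟨n, ?_⟩
    have h1 : (alphaMap A hA n).1 = p.1 := by
      apply Subtype.ext
      show theta A hA (-intVec n) 0 = (p.1 : ↥(solenoid A))
      rw [theta_zero_neg, hveq, ← h']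
    have h2 : (alphaMap A hA n).2 = p.2 := hveq
    exact Prod.ext h1 h2
  · rintro ⟨n, rfl⟩
    show theta A hA (intVec n) ↑(alphaMap A hA n).1 = 0
    have h1 : ((alphaMap A hA n).1 : ↥(solenoid A)) = theta A hA (-intVec n) 0 := rfl
    rw [h1, theta_zero_neg, theta_eq_add]
    abel

/-- `q̄` as a bundled additive homomorphism. -/
def qbarHom : (↥(SigmaGrp A) × (Fin k → ℝ)) →+ ↥(solenoid A) :=
  AddMonoidHom.mk' (qbar A hA) (qbar_add' A hA)

end Aux

/-- `q̄ : S̄ → S_A`, `q̄(ξ, v) = θ_v ξ`, is a continuous surjective group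
homomorphism with kernel exactly `N = α(ℤ^k)`; consequently `S̄/N` is canonically isomorphic to
`S_A` as a topological group. -/
theorem qbar_surjective_ker_alpha (k : ℕ) (hk : 1 ≤ k) (A : Matrix (Fin k) (Fin k) ℤ) (hA : A.det ≠ 0) :
    Continuous (qbar A hA) ∧
    (∀ p q : ↥(SigmaGrp A) × (Fin k → ℝ), qbar A hA (p + q) = qbar A hA p + qbar A hA q) ∧
    Function.Surjective (qbar A hA) ∧
    (∀ p : ↥(SigmaGrp A) × (Fin k → ℝ),
      qbar A hA p = 0 ↔ p ∈ Set.range (alphaMap A hA)) ∧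
    (∀ N : AddSubgroup (↥(SigmaGrp A) × (Fin k → ℝ)),
      (N : Set (↥(SigmaGrp A) × (Fin k → ℝ))) = Set.range (alphaMap A hA) →
      ∃ φ : ((↥(SigmaGrp A) × (Fin k → ℝ)) ⧸ N) ≃+ ↥(solenoid A),
        Continuous φ ∧ Continuous φ.symm ∧
        ∀ p : ↥(SigmaGrp A) × (Fin k → ℝ), φ (QuotientAddGroup.mk p) = qbar A hA p) := by
  haveI := compactSpace_solenoid A
  haveI := compactSpace_SigmaGrp A
  refine ⟨continuous_qbar A hA, qbar_add' A hA, qbar_surj A hA, qbar_ker A hA, ?_⟩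
  intro N hN
  have hNker : N = (qbarHom A hA).ker := by
    ext p
    rw [AddMonoidHom.mem_ker]
    show p ∈ (N : Set _) ↔ qbar A hA p = 0
    rw [hN, qbar_ker A hA]
  subst hNker
  set Q := qbarHom A hA with hQ
  let f : ((↥(SigmaGrp A) × (Fin k → ℝ)) ⧸ Q.ker) →+ ↥(solenoid A) :=
    QuotientAddGroup.lift Q.ker Q (fun x hx => hx)
  have hfmk : ∀ p, f (QuotientAddGroup.mk p) = qbar A hA p := fun p => rfl
  have hfinj : Function.Injective f := by
    intro x y
    refine QuotientAddGroup.induction_on x fun a => QuotientAddGroup.induction_on y fun b hab => ?_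
    rw [QuotientAddGroup.eq_iff_sub_mem]
    rw [AddMonoidHom.mem_ker, map_sub]
    rw [hfmk, hfmk] at hab
    show qbar A hA a - qbar A hA b = 0
    rw [hab, sub_self]
  have hfsurj : Function.Surjective f := by
    intro y
    obtain ⟨p, hp⟩ := qbar_surj A hA y
    exact ⟨QuotientAddGroup.mk p, by rw [hfmk, hp]⟩
  let φ : ((↥(SigmaGrp A) × (Fin k → ℝ)) ⧸ Q.ker) ≃+ ↥(solenoid A) :=
    AddEquiv.ofBijective f ⟨hfinj, hfsurj⟩
  have hφmk : ∀ p, φ (QuotientAddGroup.mk p) = qbar A hA p := fun p => rfl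
  have hφcont : Continuous φ := by
    rw [(QuotientAddGroup.isQuotientMap_mk Q.ker).continuous_iff]
    have h : (⇑φ ∘ (QuotientAddGroup.mk : _ → _ ⧸ Q.ker)) = qbar A hA :=
      funext fun p => hφmk p
    rw [h]
    exact continuous_qbar A hA
  have hqopen : IsOpenMap (qbar A hA) :=
    AddMonoidHom.isOpenMap_of_sigmaCompact Q (qbar_surj A hA) (continuous_qbar A hA)
  have hφopen : IsOpenMap φ := by
    intro U hU
    have himg : ⇑φ '' U = qbar A hA '' ((QuotientAddGroup.mk : _ → _ ⧸ Q.ker) ⁻¹' U) := by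
      ext y
      simp only [Set.mem_image, Set.mem_preimage]
      constructor
      · rintro ⟨x, hx, rfl⟩
        obtain ⟨p, rfl⟩ := QuotientAddGroup.mk'_surjective Q.ker x
        exact ⟨p, hx, (hφmk p).symm⟩
      · rintro ⟨p, hp, rfl⟩
        exact ⟨QuotientAddGroup.mk p, hp, hφmk p⟩
    rw [himg]
    exact hqopen _ (hU.preimage continuous_quot_mk)
  have hφsymm : Continuous φ.symm := by
    have := (Equiv.toHomeomorphOfContinuousOpen φ.toEquiv hφcont hφopen).symm.continuous
    exact this
  exact ⟨φ, hφcont, hφsymm, hφmk⟩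

end
end

section
/- The map q̃ : Σ̃ × ℝ^k → S_A defined by q̃(ξ, v) = θ_v(ξ) is a surjective group homomorphism whose kernel equals {(θ_{-v}(e), v) : v ∈ Γ}; moreover the map v ↦ (θ_{-v}(e), v) is a group isomorphism from Γ onto ker q̃. -/
open scoped Matrix

noncomputable section

variable {k : ℕ}

variable {k : ℕ}

lemma iterate_torusHom_zero (A : Matrix (Fin k) (Fin k) ℤ) (j : ℕ) :
    (⇑(torusHom A))^[j] (0 : Torus k) = 0 :=
  Function.iterate_fixed (map_zero _) j

lemma iterate_torusHom_eq_zero_mono (A : Matrix (Fin k) (Fin k) ℤ) {x : Torus k} {j m : ℕ}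
    (h : (⇑(torusHom A))^[j] x = 0) (hjm : j ≤ m) : (⇑(torusHom A))^[m] x = 0 := by
  obtain ⟨n, rfl⟩ := Nat.exists_eq_add_of_le hjm
  rw [add_comm, Function.iterate_add_apply, h, iterate_torusHom_zero]

/-- `Σ̃ = { ξ ∈ S_A : A^j (p₀ ξ) = [0] for some j ∈ ℕ }`, as a subgroup of `S_A`. -/
def SigmaTilde (A : Matrix (Fin k) (Fin k) ℤ) : AddSubgroup ↥(solenoid A) where
  carrier := {ξ | ∃ j : ℕ, (⇑(torusHom A))^[j] (pZero A ξ) = 0}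
  zero_mem' := ⟨0, by simp⟩
  add_mem' := by
    rintro a b ⟨ja, hja⟩ ⟨jb, hjb⟩
    refine ⟨max ja jb, ?_⟩
    rw [map_add, iterate_map_add,
      iterate_torusHom_eq_zero_mono A hja (le_max_left _ _),
      iterate_torusHom_eq_zero_mono A hjb (le_max_right _ _), add_zero]
  neg_mem' := by
    rintro a ⟨ja, hja⟩
    exact ⟨ja, by rw [map_neg, iterate_map_neg, hja, neg_zero]⟩

lemma pow_mulVec_lattice_mem (A : Matrix (Fin k) (Fin k) ℤ) (m : ℕ) {x : Fin k → ℝ}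
    (hx : x ∈ lattice k) : (Areal A ^ m) *ᵥ x ∈ lattice k := by
  induction m with
  | zero => simpa using hx
  | succ m ih =>
      rw [pow_succ', ← Matrix.mulVec_mulVec]
      exact mulVec_lattice_mem A ih

lemma pow_mulVec_lattice_mem_mono (A : Matrix (Fin k) (Fin k) ℤ) {v : Fin k → ℝ} {j m : ℕ}
    (h : (Areal A ^ j) *ᵥ v ∈ lattice k) (hjm : j ≤ m) :
    (Areal A ^ m) *ᵥ v ∈ lattice k := by
  obtain ⟨n, rfl⟩ := Nat.exists_eq_add_of_le hjm
  rw [add_comm, pow_add, ← Matrix.mulVec_mulVec]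
  exact pow_mulVec_lattice_mem A n h

/-- `Γ = { v ∈ ℝ^k : A^j v ∈ ℤ^k for some j ∈ ℕ }`, a subgroup of `ℝ^k` realizing
`ℤ^k[A⁻¹]`. -/
def Gamma (A : Matrix (Fin k) (Fin k) ℤ) : AddSubgroup (Fin k → ℝ) where
  carrier := {v | ∃ j : ℕ, (Areal A ^ j) *ᵥ v ∈ lattice k}
  zero_mem' := ⟨0, by simp [Matrix.mulVec_zero, zero_mem]⟩
  add_mem' := by
    rintro a b ⟨ja, hja⟩ ⟨jb, hjb⟩
    refine ⟨max ja jb, ?_⟩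
    rw [Matrix.mulVec_add]
    exact add_mem (pow_mulVec_lattice_mem_mono A hja (le_max_left _ _))
      (pow_mulVec_lattice_mem_mono A hjb (le_max_right _ _))
  neg_mem' := by
    rintro a ⟨ja, hja⟩
    exact ⟨ja, by rw [Matrix.mulVec_neg]; exact neg_mem hja⟩

/-- The map `q̃ : Σ̃ × ℝ^k → S_A`, `q̃(ξ, v) = θ_v ξ`. -/
def qtilde (A : Matrix (Fin k) (Fin k) ℤ) (hA : A.det ≠ 0)
    (p : ↥(SigmaTilde A) × (Fin k → ℝ)) : ↥(solenoid A) :=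
  theta A hA p.2 ↑p.1

lemma theta_coe_apply (A : Matrix (Fin k) (Fin k) ℤ) (hA : A.det ≠ 0) (v : Fin k → ℝ)
    (ξ : ↥(solenoid A)) (j : ℕ) :
    ((theta A hA v ξ : ↥(solenoid A)) : ℕ → Torus k) j
      = (ξ : ℕ → Torus k) j + torusProj k ((Ainv A ^ j) *ᵥ v) := rfl

lemma iterate_torusHom_proj (A : Matrix (Fin k) (Fin k) ℤ) (j : ℕ) (v : Fin k → ℝ) :
    (⇑(torusHom A))^[j] (torusProj k v) = torusProj k ((Areal A ^ j) *ᵥ v) := by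
  induction j with
  | zero => simp
  | succ j ih =>
      rw [Function.iterate_succ_apply', ih, torusHom_proj, Matrix.mulVec_mulVec,
        ← pow_succ']

lemma pZero_apply (A : Matrix (Fin k) (Fin k) ℤ) (ξ : ↥(solenoid A)) :
    pZero A ξ = (ξ : ℕ → Torus k) 0 := rfl

/-- `q̃ : Σ̃ × ℝ^k → S_A`, `q̃(ξ, v) = θ_v ξ`, is a surjective group
homomorphism whose kernel is exactly `{(θ_{-v}(e), v) : v ∈ Γ}`; moreover `v ↦ (θ_{-v}(e), v)`
is a group isomorphism from `Γ` onto `ker q̃` (it is additive, injective, and it maps `Γ` into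
`Σ̃ × ℝ^k` with image the kernel). -/
theorem qtilde_surjective_ker (k : ℕ) (hk : 1 ≤ k) (A : Matrix (Fin k) (Fin k) ℤ)
    (hA : A.det ≠ 0) :
    (∀ p q : ↥(SigmaTilde A) × (Fin k → ℝ),
      qtilde A hA (p + q) = qtilde A hA p + qtilde A hA q) ∧
    Function.Surjective (qtilde A hA) ∧
    (∀ v ∈ Gamma A, theta A hA (-v) 0 ∈ SigmaTilde A) ∧
    (∀ p : ↥(SigmaTilde A) × (Fin k → ℝ),
      qtilde A hA p = 0 ↔ p.2 ∈ Gamma A ∧ (↑p.1 : ↥(solenoid A)) = theta A hA (-p.2) 0) ∧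
    (∀ v w : Fin k → ℝ,
      theta A hA (-(v + w)) 0 = theta A hA (-v) 0 + theta A hA (-w) 0) ∧
    Function.Injective (fun v : Fin k → ℝ => (theta A hA (-v) 0, v)) := by
  refine ⟨?_, ?_, ?_, ?_, ?_, ?_⟩
  · -- additivity
    intro p q
    apply Subtype.ext
    funext j
    show ((p.1 : ↥(solenoid A)) + (q.1 : ↥(solenoid A)) : ↥(solenoid A)).1 j
        + torusProj k ((Ainv A ^ j) *ᵥ (p.2 + q.2))
      = ((p.1 : ↥(solenoid A)).1 j + torusProj k ((Ainv A ^ j) *ᵥ p.2))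
        + ((q.1 : ↥(solenoid A)).1 j + torusProj k ((Ainv A ^ j) *ᵥ q.2))
    rw [Matrix.mulVec_add, map_add]
    show ((p.1 : ↥(solenoid A)).1 j + (q.1 : ↥(solenoid A)).1 j) + _ = _
    abel
  · -- surjectivity
    intro η
    obtain ⟨v, hv⟩ := QuotientAddGroup.mk'_surjective (lattice k) ((η : ℕ → Torus k) 0)
    have hv' : torusProj k v = (η : ℕ → Torus k) 0 := hv
    have hmem : theta A hA (-v) η ∈ SigmaTilde A := by
      refine ⟨0, ?_⟩
      rw [Function.iterate_zero_apply, pZero_apply, theta_coe_apply]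
      rw [pow_zero, Matrix.one_mulVec]
      rw [← hv', ← map_add, add_neg_cancel, map_zero]
    refine ⟨(⟨theta A hA (-v) η, hmem⟩, v), ?_⟩
    apply Subtype.ext
    funext j
    show ((theta A hA (-v) η : ↥(solenoid A)) : ℕ → Torus k) j
        + torusProj k ((Ainv A ^ j) *ᵥ v) = (η : ℕ → Torus k) j
    rw [theta_coe_apply, Matrix.mulVec_neg, map_neg, add_assoc, neg_add_cancel, add_zero]
  · -- Γ maps into Σ̃
    rintro v ⟨j, hj⟩
    refine ⟨j, ?_⟩
    rw [pZero_apply, theta_coe_apply]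
    have h0 : ((0 : ↥(solenoid A)) : ℕ → Torus k) 0 = 0 := rfl
    rw [h0, zero_add, pow_zero, Matrix.one_mulVec, iterate_torusHom_proj,
      Matrix.mulVec_neg, map_neg, neg_eq_zero]
    exact (QuotientAddGroup.eq_zero_iff _).mpr hj
  · -- kernel characterization
    intro p
    constructor
    · intro h
      have hcoord : ∀ j, ((p.1 : ↥(solenoid A)) : ℕ → Torus k) j
          + torusProj k ((Ainv A ^ j) *ᵥ p.2) = 0 := by
        intro j
        have := congrArg (fun ξ : ↥(solenoid A) => (ξ : ℕ → Torus k) j) h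
        exact this
      have heq : (↑p.1 : ↥(solenoid A)) = theta A hA (-p.2) 0 := by
        apply Subtype.ext
        funext j
        rw [theta_coe_apply]
        have h0 : ((0 : ↥(solenoid A)) : ℕ → Torus k) j = 0 := rfl
        rw [h0, zero_add, Matrix.mulVec_neg, map_neg]
        exact eq_neg_of_add_eq_zero_left (hcoord j)
      refine ⟨?_, heq⟩
      obtain ⟨j, hj⟩ := p.1.2
      rw [pZero_apply, heq, theta_coe_apply] at hj
      have h0 : ((0 : ↥(solenoid A)) : ℕ → Torus k) 0 = 0 := rfl
      rw [h0, zero_add, pow_zero, Matrix.one_mulVec, map_neg, iterate_map_neg,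
        iterate_torusHom_proj, neg_eq_zero] at hj
      exact ⟨j, (QuotientAddGroup.eq_zero_iff _).mp hj⟩
    · rintro ⟨hv, hξ⟩
      apply Subtype.ext
      funext j
      show ((p.1 : ↥(solenoid A)) : ℕ → Torus k) j
          + torusProj k ((Ainv A ^ j) *ᵥ p.2) = ((0 : ↥(solenoid A)) : ℕ → Torus k) j
      rw [hξ, theta_coe_apply]
      have h0 : ((0 : ↥(solenoid A)) : ℕ → Torus k) j = 0 := rfl
      rw [h0, zero_add, Matrix.mulVec_neg, map_neg, neg_add_cancel]
  · -- additivity of v ↦ θ_{-v}(e)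
    intro v w
    apply Subtype.ext
    funext j
    show ((0 : ↥(solenoid A)) : ℕ → Torus k) j + torusProj k ((Ainv A ^ j) *ᵥ (-(v + w)))
      = (((0 : ↥(solenoid A)) : ℕ → Torus k) j + torusProj k ((Ainv A ^ j) *ᵥ (-v)))
        + (((0 : ↥(solenoid A)) : ℕ → Torus k) j + torusProj k ((Ainv A ^ j) *ᵥ (-w)))
    have h0 : ((0 : ↥(solenoid A)) : ℕ → Torus k) j = 0 := rfl
    rw [h0, neg_add, Matrix.mulVec_add, map_add, zero_add, zero_add, zero_add]
  · intro v w h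
    exact congrArg Prod.snd h

end
end
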